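/- Under the stated assumptions, the mean squared ambiguity function has the closed form E[|χ(τ,ν)|²] = Σ_{|n| < L} α_n(ν) · |ψ(τ + nT, ν)|², where α_0(ν) = L(μ₄ − 1) + |Σ_{m=0}^{L−1} exp(−2πi·m·ν·T)|² and α_n(ν) = L − |n| for 0 < |n| < L. -/

import Mathlib

open MeasureTheory ProbabilityTheory Complex
open Filter

section helpers

lemma amgm4 {a b c d : ℝ} (ha : 0 ≤ a) (hb : 0 ≤ b) (hc : 0 ≤ c) (hd : 0 ≤ d) :
    a * b * c * d ≤ (a ^ 4 + b ^ 4 + c ^ 4 + d ^ 4) / 4 := by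
  nlinarith [sq_nonneg (a*b - c*d), sq_nonneg (a^2 - b^2), sq_nonneg (c^2 - d^2),
    mul_nonneg ha hb, mul_nonneg hc hd, sq_nonneg (a*b + c*d)]

lemma max_pow4 {a : ℝ} (ha : 0 ≤ a) : (max 1 a) ^ 4 ≤ 1 + a ^ 4 := by
  rcases le_total a 1 with h | h
  · rw [max_eq_left h]; nlinarith [pow_nonneg ha 4]
  · rw [max_eq_right h]; nlinarith

lemma bound4 {A B C D a b c d : ℝ} (hA0 : 0 ≤ A) (hB0 : 0 ≤ B) (hC0 : 0 ≤ C) (hD0 : 0 ≤ D)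
    (ha : 0 ≤ a) (hb : 0 ≤ b) (hc : 0 ≤ c) (hd : 0 ≤ d)
    (hA : A ≤ max 1 a) (hB : B ≤ max 1 b) (hC : C ≤ max 1 c) (hD : D ≤ max 1 d) :
    A * B * C * D ≤ 1 + (a ^ 4 + b ^ 4 + c ^ 4 + d ^ 4) / 4 := by
  have h0 : ∀ x : ℝ, (0:ℝ) ≤ max 1 x := fun x => le_trans zero_le_one (le_max_left _ _)
  have h1 : A * B * C * D ≤ max 1 a * max 1 b * max 1 c * max 1 d := by
    apply mul_le_mul _ hD hD0 (mul_nonneg (mul_nonneg (h0 a) (h0 b)) (h0 c))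
    apply mul_le_mul _ hC hC0 (mul_nonneg (h0 a) (h0 b))
    exact mul_le_mul hA hB hB0 (h0 a)
  have h2 := amgm4 (h0 a) (h0 b) (h0 c) (h0 d)
  have h3 := max_pow4 ha
  have h4 := max_pow4 hb
  have h5 := max_pow4 hc
  have h6 := max_pow4 hd
  linarith

lemma int_mul4 {Ω : Type*} {mΩ : MeasurableSpace Ω} {μ : Measure Ω} [IsFiniteMeasure μ]
    {L : ℕ} (s : Fin L → Ω → ℂ) (hmeas : ∀ n, Measurable (s n))
    (hmom4 : ∀ n, Integrable (fun ω => (norm (s n ω)) ^ 4) μ)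
    (a b c d : Fin L) (u v w x : ℂ → ℂ)
    (hu : Measurable u) (hv : Measurable v) (hw : Measurable w) (hx : Measurable x)
    (hbu : ∀ z, norm (u z) ≤ max 1 (norm z))
    (hbv : ∀ z, norm (v z) ≤ max 1 (norm z))
    (hbw : ∀ z, norm (w z) ≤ max 1 (norm z))
    (hbx : ∀ z, norm (x z) ≤ max 1 (norm z)) :
    Integrable (fun ω => u (s a ω) * v (s b ω) * w (s c ω) * x (s d ω)) μ := by
  have hg : Integrable (fun ω => 1 + ((norm (s a ω))^4 + (norm (s b ω))^4
      + (norm (s c ω))^4 + (norm (s d ω))^4) / 4) μ := by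
    apply (integrable_const (1:ℝ)).add
    exact ((((hmom4 a).add (hmom4 b)).add (hmom4 c)).add (hmom4 d)).div_const 4
  apply Integrable.mono' hg
  · exact (((hu.comp (hmeas a)).mul (hv.comp (hmeas b))).mul
      (hw.comp (hmeas c))).mul (hx.comp (hmeas d)) |>.aestronglyMeasurable
  · filter_upwards with ω
    have e : ‖u (s a ω) * v (s b ω) * w (s c ω) * x (s d ω)‖
        = norm (u (s a ω)) * norm (v (s b ω)) * norm (w (s c ω))
          * norm (x (s d ω)) := by simp [norm_mul]
    rw [e]
    exact bound4 (norm_nonneg _) (norm_nonneg _) (norm_nonneg _)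
      (norm_nonneg _) (norm_nonneg _) (norm_nonneg _)
      (norm_nonneg _) (norm_nonneg _) (hbu _) (hbv _) (hbw _) (hbx _)


lemma indepFun_integral_mul_complex {Ω : Type*} {mΩ : MeasurableSpace Ω} {μ : Measure Ω}
    {X Y : Ω → ℂ} (h : IndepFun X Y μ) (hX : Integrable X μ) (hY : Integrable Y μ) :
    ∫ ω, X ω * Y ω ∂μ = (∫ ω, X ω ∂μ) * ∫ ω, Y ω ∂μ := by
  have hXY : Integrable (fun ω => X ω * Y ω) μ := h.integrable_mul hX hY
  have mre : Measurable fun z : ℂ => z.re := Complex.measurable_re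
  have mim : Measurable fun z : ℂ => z.im := Complex.measurable_im
  have hrr : IndepFun (fun ω => (X ω).re) (fun ω => (Y ω).re) μ := h.comp mre mre
  have hri : IndepFun (fun ω => (X ω).re) (fun ω => (Y ω).im) μ := h.comp mre mim
  have hir : IndepFun (fun ω => (X ω).im) (fun ω => (Y ω).re) μ := h.comp mim mre
  have hii : IndepFun (fun ω => (X ω).im) (fun ω => (Y ω).im) μ := h.comp mim mim
  have i1 : Integrable (fun ω => (X ω).re * (Y ω).re) μ := hrr.integrable_mul hX.re hY.re
  have i2 : Integrable (fun ω => (X ω).im * (Y ω).im) μ := hii.integrable_mul hX.im hY.im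
  have i3 : Integrable (fun ω => (X ω).re * (Y ω).im) μ := hri.integrable_mul hX.re hY.im
  have i4 : Integrable (fun ω => (X ω).im * (Y ω).re) μ := hir.integrable_mul hX.im hY.re
  have rX : ∫ ω, (X ω).re ∂μ = (∫ ω, X ω ∂μ).re := integral_re hX
  have rY : ∫ ω, (Y ω).re ∂μ = (∫ ω, Y ω ∂μ).re := integral_re hY
  have iX : ∫ ω, (X ω).im ∂μ = (∫ ω, X ω ∂μ).im := integral_im hX
  have iY : ∫ ω, (Y ω).im ∂μ = (∫ ω, Y ω ∂μ).im := integral_im hY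
  apply Complex.ext
  · have e1 : (∫ ω, X ω * Y ω ∂μ).re = ∫ ω, (X ω * Y ω).re ∂μ := (integral_re hXY).symm
    rw [e1]
    simp only [Complex.mul_re]
    rw [integral_sub i1 i2, hrr.integral_fun_mul_eq_mul_integral hX.re.aestronglyMeasurable hY.re.aestronglyMeasurable,
      hii.integral_fun_mul_eq_mul_integral hX.im.aestronglyMeasurable hY.im.aestronglyMeasurable, rX, rY, iX, iY]
  · have e1 : (∫ ω, X ω * Y ω ∂μ).im = ∫ ω, (X ω * Y ω).im ∂μ := (integral_im hXY).symm
    rw [e1]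
    simp only [Complex.mul_im]
    rw [integral_add i3 i4, hri.integral_fun_mul_eq_mul_integral hX.re.aestronglyMeasurable hY.im.aestronglyMeasurable,
      hir.integral_fun_mul_eq_mul_integral hX.im.aestronglyMeasurable hY.re.aestronglyMeasurable, rX, rY, iX, iY]


lemma count_pairs (L : ℕ) (k : ℤ) (hk1 : -(L:ℤ) < k) (hk2 : k < L) :
    ((Finset.range L ×ˢ Finset.range L).filter fun x => (x.2:ℤ) - (x.1:ℤ) = k).card
      = L - k.natAbs := by
  rw [← Finset.card_range (L - k.natAbs)]
  apply Finset.card_bij' (fun x _ => min x.1 x.2)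
    (fun n _ => if 0 ≤ k then (n, n + k.natAbs) else (n + k.natAbs, n))
  · intro a ha
    simp only [Finset.mem_filter, Finset.mem_product, Finset.mem_range] at ha ⊢
    omega
  · intro a ha
    simp only [Finset.mem_range] at ha
    simp only [Finset.mem_filter, Finset.mem_product, Finset.mem_range]
    split_ifs with h <;> refine ⟨⟨?_, ?_⟩, ?_⟩ <;> simp only [] <;> omega
  · intro a ha
    simp only [Finset.mem_filter, Finset.mem_product, Finset.mem_range] at ha
    split_ifs with h <;> rw [Prod.ext_iff] <;> constructor <;> simp only [] <;> omega
  · intro a ha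
    simp only [Finset.mem_range] at ha
    split_ifs with h <;> simp only [] <;> omega

lemma sum_shift (L : ℕ) (g : ℤ → ℝ) :
    (∑ n : Fin L, ∑ m : Fin L, g ((m:ℤ) - (n:ℤ)))
      = ∑ k ∈ Finset.Ioo (-(L:ℤ)) (L:ℤ), ((L:ℝ) - |(k:ℝ)|) * g k := by
  have h1 : (∑ n : Fin L, ∑ m : Fin L, g ((m:ℤ) - (n:ℤ)))
      = ∑ x ∈ Finset.range L ×ˢ Finset.range L, g ((x.2:ℤ) - (x.1:ℤ)) := by
    rw [Finset.sum_product]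
    rw [Fin.sum_univ_eq_sum_range (fun n => ∑ m : Fin L, g ((m:ℤ) - (n:ℤ)))]
    exact Finset.sum_congr rfl fun n _ =>
      Fin.sum_univ_eq_sum_range (fun m => g ((m:ℤ) - (n:ℤ))) _
  rw [h1, ← Finset.sum_fiberwise_of_maps_to (g := fun x : ℕ × ℕ => (x.2:ℤ) - (x.1:ℤ))
      (t := Finset.Ioo (-(L:ℤ)) (L:ℤ)) ?_]
  · apply Finset.sum_congr rfl
    intro k hk
    simp only [Finset.mem_Ioo] at hk
    have : ∀ x ∈ (Finset.range L ×ˢ Finset.range L).filter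
        (fun x : ℕ × ℕ => (x.2:ℤ) - (x.1:ℤ) = k), g ((x.2:ℤ) - (x.1:ℤ)) = g k := by
      intro x hx
      simp only [Finset.mem_filter] at hx
      rw [hx.2]
    rw [Finset.sum_congr rfl this, Finset.sum_const, count_pairs L k hk.1 hk.2,
      nsmul_eq_mul]
    congr 1
    have hle : k.natAbs ≤ L := by omega
    push_cast [Nat.cast_sub hle]
    rw [Nat.cast_natAbs, Int.cast_abs]
  · intro x hx
    simp only [Finset.mem_product, Finset.mem_range] at hx
    simp only [Finset.mem_Ioo]
    omega

lemma sum_ifs {L : ℕ} (c : Fin L → Fin L → ℂ) (μ₄ : ℝ) :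
    ∑ x : Fin L × Fin L, ∑ y : Fin L × Fin L,
      ((if x.1 = x.2 ∧ y.1 = y.2 then (1:ℂ) else 0)
        + (if x.1 = y.1 ∧ x.2 = y.2 then (1:ℂ) else 0)
        + (if x.1 = x.2 ∧ x.1 = y.1 ∧ x.1 = y.2 then (μ₄ : ℂ) - 2 else 0))
        * (c x.1 x.2 * (starRingEnd ℂ) (c y.1 y.2))
    = (∑ n, c n n) * (starRingEnd ℂ) (∑ n, c n n)
      + (∑ x : Fin L × Fin L, c x.1 x.2 * (starRingEnd ℂ) (c x.1 x.2))
      + ((μ₄ : ℂ) - 2) * ∑ n, c n n * (starRingEnd ℂ) (c n n) := by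
  have expand : ∀ x y : Fin L × Fin L,
      ((if x.1 = x.2 ∧ y.1 = y.2 then (1:ℂ) else 0)
        + (if x.1 = y.1 ∧ x.2 = y.2 then (1:ℂ) else 0)
        + (if x.1 = x.2 ∧ x.1 = y.1 ∧ x.1 = y.2 then (μ₄ : ℂ) - 2 else 0))
        * (c x.1 x.2 * (starRingEnd ℂ) (c y.1 y.2))
      = ((if x.1 = x.2 then (1:ℂ) else 0) * c x.1 x.2)
          * ((if y.1 = y.2 then (1:ℂ) else 0) * (starRingEnd ℂ) (c y.1 y.2))
        + (if x = y then (1:ℂ) else 0) * (c x.1 x.2 * (starRingEnd ℂ) (c y.1 y.2))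
        + ((μ₄ : ℂ) - 2) * ((if x.1 = x.2 then (1:ℂ) else 0) * c x.1 x.2
            * ((if (x.1, x.1) = y then (1:ℂ) else 0) * (starRingEnd ℂ) (c y.1 y.2))) := by
    intro x y
    obtain ⟨a, b⟩ := x
    obtain ⟨u, v⟩ := y
    simp only [Prod.mk.injEq, Prod.ext_iff]
    split_ifs <;> first | ring1 | (exfalso; tauto) | (exfalso; simp_all) | simp_all
  have diag : ∀ f : Fin L → Fin L → ℂ,
      (∑ x : Fin L × Fin L, (if x.1 = x.2 then (1:ℂ) else 0) * f x.1 x.2) = ∑ n, f n n := by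
    intro f
    rw [Fintype.sum_prod_type]
    simp [Finset.sum_ite_eq, ite_mul]
  calc ∑ x : Fin L × Fin L, ∑ y : Fin L × Fin L,
      ((if x.1 = x.2 ∧ y.1 = y.2 then (1:ℂ) else 0)
        + (if x.1 = y.1 ∧ x.2 = y.2 then (1:ℂ) else 0)
        + (if x.1 = x.2 ∧ x.1 = y.1 ∧ x.1 = y.2 then (μ₄ : ℂ) - 2 else 0))
        * (c x.1 x.2 * (starRingEnd ℂ) (c y.1 y.2))
      = (∑ x : Fin L × Fin L, ∑ y : Fin L × Fin L,
          ((if x.1 = x.2 then (1:ℂ) else 0) * c x.1 x.2)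
            * ((if y.1 = y.2 then (1:ℂ) else 0) * (starRingEnd ℂ) (c y.1 y.2)))
        + (∑ x : Fin L × Fin L, ∑ y : Fin L × Fin L,
            (if x = y then (1:ℂ) else 0) * (c x.1 x.2 * (starRingEnd ℂ) (c y.1 y.2)))
        + ∑ x : Fin L × Fin L, ∑ y : Fin L × Fin L,
            ((μ₄ : ℂ) - 2) * ((if x.1 = x.2 then (1:ℂ) else 0) * c x.1 x.2
              * ((if (x.1, x.1) = y then (1:ℂ) else 0) * (starRingEnd ℂ) (c y.1 y.2))) := by
        simp only [expand, Finset.sum_add_distrib]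
    _ = (∑ n, c n n) * (starRingEnd ℂ) (∑ n, c n n)
      + (∑ x : Fin L × Fin L, c x.1 x.2 * (starRingEnd ℂ) (c x.1 x.2))
      + ((μ₄ : ℂ) - 2) * ∑ n, c n n * (starRingEnd ℂ) (c n n) := by
        congr 1
        · congr 1
          · rw [← Finset.sum_mul_sum, diag (fun a b => c a b),
              diag (fun a b => (starRingEnd ℂ) (c a b)), map_sum]
          · apply Finset.sum_congr rfl
            intro x _
            simp [Finset.sum_ite_eq, ite_mul]
        · have step : ∀ x : Fin L × Fin L,
              (∑ y : Fin L × Fin L, ((μ₄ : ℂ) - 2) * ((if x.1 = x.2 then (1:ℂ) else 0) * c x.1 x.2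
                * ((if (x.1, x.1) = y then (1:ℂ) else 0) * (starRingEnd ℂ) (c y.1 y.2))))
              = ((μ₄ : ℂ) - 2) * ((if x.1 = x.2 then (1:ℂ) else 0)
                  * (c x.1 x.2 * (starRingEnd ℂ) (c x.1 x.1))) := by
            intro x
            rw [← Finset.mul_sum]
            congr 1
            simp [Finset.sum_ite_eq, ite_mul, mul_ite, Finset.mul_sum]
            try (split_ifs <;> ring)
          rw [Finset.sum_congr rfl fun x _ => step x, ← Finset.mul_sum,
            diag (fun a b => c a b * (starRingEnd ℂ) (c a a))]

end helpers

section aux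
variable {Ω : Type*} {mΩ : MeasurableSpace Ω} {μ : Measure Ω} {L : ℕ} {s : Fin L → Ω → ℂ}

lemma indep_single (hindep : iIndepFun s μ)
    (hmeas : ∀ n, Measurable (s n)) {j a b c : Fin L}
    (hja : j ≠ a) (hjb : j ≠ b) (hjc : j ≠ c) {φ u v w : ℂ → ℂ}
    (hφ : Measurable φ) (hu : Measurable u) (hv : Measurable v) (hw : Measurable w) :
    IndepFun (fun ω => φ (s j ω)) (fun ω => u (s a ω) * v (s b ω) * w (s c ω)) μ := by
  classical
  have hd : Disjoint ({j} : Finset (Fin L)) ({a, b, c} : Finset (Fin L)) := by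
    simp [Finset.disjoint_left, hja, hjb, hjc]
  have base := hindep.indepFun_finset {j} {a,b,c} hd hmeas
  have ha : a ∈ ({a,b,c} : Finset (Fin L)) := by simp
  have hb : b ∈ ({a,b,c} : Finset (Fin L)) := by simp
  have hc : c ∈ ({a,b,c} : Finset (Fin L)) := by simp
  have hj : j ∈ ({j} : Finset (Fin L)) := Finset.mem_singleton_self j
  exact base.comp (φ := fun v' : (({j} : Finset (Fin L)) → ℂ) => φ (v' ⟨j, hj⟩))
    (ψ := fun v' : (({a,b,c} : Finset (Fin L)) → ℂ) =>
      u (v' ⟨a, ha⟩) * v (v' ⟨b, hb⟩) * w (v' ⟨c, hc⟩))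
    (hφ.comp (measurable_pi_apply _))
    (((hu.comp (measurable_pi_apply _)).mul (hv.comp (measurable_pi_apply _))).mul
      (hw.comp (measurable_pi_apply _)))


lemma single_zero [IsFiniteMeasure μ] (hindep : iIndepFun s μ)
    (hmeas : ∀ n, Measurable (s n))
    (hmom4 : ∀ n, Integrable (fun ω => (norm (s n ω)) ^ 4) μ)
    {j a b c : Fin L} (hja : j ≠ a) (hjb : j ≠ b) (hjc : j ≠ c) {φ u v w : ℂ → ℂ}
    (hφ : Measurable φ) (hu : Measurable u) (hv : Measurable v) (hw : Measurable w)
    (bφ : ∀ z, norm (φ z) ≤ max 1 (norm z))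
    (bu : ∀ z, norm (u z) ≤ max 1 (norm z))
    (bv : ∀ z, norm (v z) ≤ max 1 (norm z))
    (bw : ∀ z, norm (w z) ≤ max 1 (norm z))
    (hφ0 : ∫ ω, φ (s j ω) ∂μ = 0) :
    ∫ ω, φ (s j ω) * (u (s a ω) * v (s b ω) * w (s c ω)) ∂μ = 0 := by
  have hI := indep_single hindep hmeas hja hjb hjc hφ hu hv hw
  have h1 : Integrable (fun ω => φ (s j ω)) μ := by
    have := int_mul4 s hmeas hmom4 j j j j φ (fun _ => 1) (fun _ => 1) (fun _ => 1)
      hφ measurable_const measurable_const measurable_const bφ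
      (fun z => by simp) (fun z => by simp) (fun z => by simp)
    simpa using this
  have h3 : Integrable (fun ω => u (s a ω) * v (s b ω) * w (s c ω)) μ := by
    have := int_mul4 s hmeas hmom4 a b c c u v w (fun _ => 1)
      hu hv hw measurable_const bu bv bw (fun z => by simp)
    simpa using this
  rw [indepFun_integral_mul_complex hI h1 h3, hφ0, zero_mul]

lemma E4 [IsProbabilityMeasure μ] {μ₄ : ℝ}
    (hindep : iIndepFun s μ)
    (hmeas : ∀ n, Measurable (s n))
    (hmean : ∀ n, ∫ ω, s n ω ∂μ = 0)
    (hpseudo : ∀ n, ∫ ω, (s n ω) ^ 2 ∂μ = 0)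
    (hE2 : ∀ n, ∫ ω, (norm (s n ω)) ^ 2 ∂μ = 1)
    (hmom4 : ∀ n, Integrable (fun ω => (norm (s n ω)) ^ 4) μ)
    (hE4 : ∀ n, ∫ ω, (norm (s n ω)) ^ 4 ∂μ = μ₄)
    (n m p q : Fin L) :
    ∫ ω, s n ω * (starRingEnd ℂ) (s m ω) * (starRingEnd ℂ) (s p ω) * s q ω ∂μ
      = (if n = m ∧ p = q then 1 else 0) + (if n = p ∧ m = q then 1 else 0)
        + (if n = m ∧ n = p ∧ n = q then (μ₄ : ℂ) - 2 else 0) := by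
  have mconj : Measurable fun z : ℂ => (starRingEnd ℂ) z := Complex.continuous_conj.measurable
  have mid : Measurable fun z : ℂ => z := measurable_id
  have bid : ∀ z : ℂ, norm ((fun z : ℂ => z) z) ≤ max 1 (norm z) :=
    fun z => le_max_right _ _
  have bconj : ∀ z : ℂ, norm ((fun z : ℂ => (starRingEnd ℂ) z) z) ≤ max 1 (norm z) :=
    fun z => by rw [Complex.norm_conj]; exact le_max_right _ _
  have hconjmean : ∀ r : Fin L, ∫ ω, (starRingEnd ℂ) (s r ω) ∂μ = 0 := fun r => by
    rw [integral_conj, hmean r, map_zero]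
  have hsq : ∀ r : Fin L, ∫ ω, s r ω * (starRingEnd ℂ) (s r ω) ∂μ = 1 := by
    intro r
    have h : (fun ω => s r ω * (starRingEnd ℂ) (s r ω))
        = fun ω => ((norm (s r ω) ^ 2 : ℝ) : ℂ) := by
      funext ω; rw [Complex.mul_conj, ← Complex.sq_norm]
    rw [h, show ∫ ω, ((norm (s r ω) ^ 2 : ℝ) : ℂ) ∂μ
      = ((∫ ω, norm (s r ω) ^ 2 ∂μ : ℝ) : ℂ) from integral_ofReal,
      hE2 r, Complex.ofReal_one]
  have hintsq : ∀ r : Fin L, Integrable (fun ω => s r ω * (starRingEnd ℂ) (s r ω)) μ := by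
    intro r
    have := int_mul4 s hmeas hmom4 r r r r (fun z => z) (fun z => (starRingEnd ℂ) z)
      (fun _ => 1) (fun _ => 1) mid mconj measurable_const measurable_const
      bid bconj (fun z => by simp) (fun z => by simp)
    simpa using this
  have hintsq2 : ∀ r : Fin L, Integrable (fun ω => s r ω * s r ω) μ := by
    intro r
    have := int_mul4 s hmeas hmom4 r r r r (fun z => z) (fun z => z)
      (fun _ => 1) (fun _ => 1) mid mid measurable_const measurable_const
      bid bid (fun z => by simp) (fun z => by simp)
    simpa using this
  have hintcsq : ∀ r : Fin L,
      Integrable (fun ω => (starRingEnd ℂ) (s r ω) * (starRingEnd ℂ) (s r ω)) μ := by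
    intro r
    have := int_mul4 s hmeas hmom4 r r r r (fun z => (starRingEnd ℂ) z)
      (fun z => (starRingEnd ℂ) z) (fun _ => 1) (fun _ => 1) mconj mconj
      measurable_const measurable_const bconj bconj (fun z => by simp) (fun z => by simp)
    simpa using this
  have pair_one : ∀ a b : Fin L, a ≠ b →
      ∫ ω, (s a ω * (starRingEnd ℂ) (s a ω)) * (s b ω * (starRingEnd ℂ) (s b ω)) ∂μ = 1 := by
    intro a b hab
    have hI : IndepFun (fun ω => s a ω * (starRingEnd ℂ) (s a ω))
        (fun ω => s b ω * (starRingEnd ℂ) (s b ω)) μ :=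
      (hindep.indepFun hab).comp (mid.mul mconj) (mid.mul mconj)
    rw [indepFun_integral_mul_complex hI (hintsq a) (hintsq b), hsq a, hsq b, one_mul]
  have pair_zero : ∀ a b : Fin L, a ≠ b →
      ∫ ω, (s a ω * s a ω) * ((starRingEnd ℂ) (s b ω) * (starRingEnd ℂ) (s b ω)) ∂μ = 0 := by
    intro a b hab
    have hI : IndepFun (fun ω => s a ω * s a ω)
        (fun ω => (starRingEnd ℂ) (s b ω) * (starRingEnd ℂ) (s b ω)) μ :=
      (hindep.indepFun hab).comp (mid.mul mid) (mconj.mul mconj)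
    rw [indepFun_integral_mul_complex hI (hintsq2 a) (hintcsq b)]
    have h0 : ∫ ω, s a ω * s a ω ∂μ = 0 := by
      have := hpseudo a
      simpa [pow_two] using this
    rw [h0, zero_mul]
  by_cases hnm : n = m
  · subst hnm
    by_cases hpq : p = q
    · subst hpq
      by_cases hnp : n = p
      · subst hnp
        have h : ∫ ω, s n ω * (starRingEnd ℂ) (s n ω) * (starRingEnd ℂ) (s n ω) * s n ω ∂μ
            = ((μ₄ : ℝ) : ℂ) := by
          have hfun : (fun ω => s n ω * (starRingEnd ℂ) (s n ω) * (starRingEnd ℂ) (s n ω) * s n ω)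
              = fun ω => ((norm (s n ω) ^ 4 : ℝ) : ℂ) := by
            funext ω
            rw [show s n ω * (starRingEnd ℂ) (s n ω) * (starRingEnd ℂ) (s n ω) * s n ω
              = (s n ω * (starRingEnd ℂ) (s n ω)) * (s n ω * (starRingEnd ℂ) (s n ω)) by ring,
              Complex.mul_conj, ← Complex.ofReal_mul]
            congr 1
            rw [← Complex.sq_norm]; ring
          rw [hfun, show ∫ ω, ((norm (s n ω) ^ 4 : ℝ) : ℂ) ∂μ
            = ((∫ ω, norm (s n ω) ^ 4 ∂μ : ℝ) : ℂ) from integral_ofReal, hE4 n]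
        rw [h]; simp; ring
      · rw [integral_congr_ae (Eventually.of_forall (fun ω => show
          s n ω * (starRingEnd ℂ) (s n ω) * (starRingEnd ℂ) (s p ω) * s p ω
          = (s n ω * (starRingEnd ℂ) (s n ω)) * (s p ω * (starRingEnd ℂ) (s p ω)) by ring)),
          pair_one n p hnp]
        simp [hnp]
    · -- n = m, p ≠ q : zero
      have hc1 : ¬(n = p ∧ n = q) := fun hh => hpq (hh.1 ▸ hh.2 ▸ rfl)
      have hc2 : ¬(n = p ∧ n = q) := hc1
      by_cases hpn : p = n
      · subst hpn
        have hqp : q ≠ p := fun h => hpq h.symm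
        have hz := single_zero hindep hmeas hmom4 hqp hqp hqp
          (φ := fun z => z) (u := fun z => z) (v := fun z => (starRingEnd ℂ) z)
          (w := fun z => (starRingEnd ℂ) z) mid mid mconj mconj bid bid bconj bconj (hmean q)
        rw [integral_congr_ae (Eventually.of_forall (fun ω => show
          s p ω * (starRingEnd ℂ) (s p ω) * (starRingEnd ℂ) (s p ω) * s q ω
          = s q ω * (s p ω * (starRingEnd ℂ) (s p ω) * (starRingEnd ℂ) (s p ω)) by ring)), hz]
        have : ¬(p = p ∧ p = q) := fun hh => hpq hh.2
        simp [hpq, this]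
      · have hpn' : p ≠ n := hpn
        have hz := single_zero hindep hmeas hmom4 hpn' hpn' hpq
          (φ := fun z => (starRingEnd ℂ) z) (u := fun z => z)
          (v := fun z => (starRingEnd ℂ) z) (w := fun z => z)
          mconj mid mconj mid bconj bid bconj bid (hconjmean p)
        rw [integral_congr_ae (Eventually.of_forall (fun ω => show
          s n ω * (starRingEnd ℂ) (s n ω) * (starRingEnd ℂ) (s p ω) * s q ω
          = (starRingEnd ℂ) (s p ω) * (s n ω * (starRingEnd ℂ) (s n ω) * s q ω) by ring)), hz]
        have h2 : ¬(n = p ∧ n = q) := fun hh => hpn (hh.1.symm)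
        simp [hpq, h2]
  · -- n ≠ m
    by_cases hpq : p = q
    · subst hpq
      by_cases hnp : n = p
      · subst hnp
        have hmn : m ≠ n := fun h => hnm h.symm
        have hz := single_zero hindep hmeas hmom4 hmn hmn hmn
          (φ := fun z => (starRingEnd ℂ) z) (u := fun z => z)
          (v := fun z => (starRingEnd ℂ) z) (w := fun z => z)
          mconj mid mconj mid bconj bid bconj bid (hconjmean m)
        rw [integral_congr_ae (Eventually.of_forall (fun ω => show
          s n ω * (starRingEnd ℂ) (s m ω) * (starRingEnd ℂ) (s n ω) * s n ω
          = (starRingEnd ℂ) (s m ω) * (s n ω * (starRingEnd ℂ) (s n ω) * s n ω) by ring)), hz]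
        have h1 : ¬(n = m ∧ n = n) := fun hh => hnm hh.1
        simp [hnm, h1, hmn]
      · have hz := single_zero hindep hmeas hmom4 hnm hnp hnp
          (φ := fun z => z) (u := fun z => (starRingEnd ℂ) z)
          (v := fun z => (starRingEnd ℂ) z) (w := fun z => z)
          mid mconj mconj mid bid bconj bconj bid (hmean n)
        rw [integral_congr_ae (Eventually.of_forall (fun ω => show
          s n ω * (starRingEnd ℂ) (s m ω) * (starRingEnd ℂ) (s p ω) * s p ω
          = s n ω * ((starRingEnd ℂ) (s m ω) * (starRingEnd ℂ) (s p ω) * s p ω) by ring)), hz]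
        simp [hnm, hnp]
    · -- n ≠ m, p ≠ q
      by_cases hnp : n = p
      · subst hnp
        by_cases hmq : m = q
        · subst hmq
          rw [integral_congr_ae (Eventually.of_forall (fun ω => show
            s n ω * (starRingEnd ℂ) (s m ω) * (starRingEnd ℂ) (s n ω) * s m ω
            = s n ω * (starRingEnd ℂ) (s n ω) * (s m ω * (starRingEnd ℂ) (s m ω)) by ring)),
            pair_one n m hnm]
          simp [hnm]
        · have hmn : m ≠ n := fun h => hnm h.symm
          have hz := single_zero hindep hmeas hmom4 hmn hmn hmq
            (φ := fun z => (starRingEnd ℂ) z) (u := fun z => z)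
            (v := fun z => (starRingEnd ℂ) z) (w := fun z => z)
            mconj mid mconj mid bconj bid bconj bid (hconjmean m)
          rw [integral_congr_ae (Eventually.of_forall (fun ω => show
            s n ω * (starRingEnd ℂ) (s m ω) * (starRingEnd ℂ) (s n ω) * s q ω
            = (starRingEnd ℂ) (s m ω) * (s n ω * (starRingEnd ℂ) (s n ω) * s q ω) by ring)), hz]
          simp [hnm, hmq, hpq]
      · by_cases hnq : n = q
        · subst hnq
          by_cases hmp : m = p
          · subst hmp
            rw [integral_congr_ae (Eventually.of_forall (fun ω => show
              s n ω * (starRingEnd ℂ) (s m ω) * (starRingEnd ℂ) (s m ω) * s n ω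
              = s n ω * s n ω * ((starRingEnd ℂ) (s m ω) * (starRingEnd ℂ) (s m ω)) by ring)),
              pair_zero n m hnm]
            simp [hnm, hnp]
          · have hmn : m ≠ n := fun h => hnm h.symm
            have hz := single_zero hindep hmeas hmom4 hmn hmp hmn
              (φ := fun z => (starRingEnd ℂ) z) (u := fun z => z)
              (v := fun z => (starRingEnd ℂ) z) (w := fun z => z)
              mconj mid mconj mid bconj bid bconj bid (hconjmean m)
            rw [integral_congr_ae (Eventually.of_forall (fun ω => show
              s n ω * (starRingEnd ℂ) (s m ω) * (starRingEnd ℂ) (s p ω) * s n ω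
              = (starRingEnd ℂ) (s m ω) * (s n ω * (starRingEnd ℂ) (s p ω) * s n ω) by ring)), hz]
            simp [hnm, hnp]
        · have hz := single_zero hindep hmeas hmom4 hnm hnp hnq
            (φ := fun z => z) (u := fun z => (starRingEnd ℂ) z)
            (v := fun z => (starRingEnd ℂ) z) (w := fun z => z)
            mid mconj mconj mid bid bconj bconj bid (hmean n)
          rw [integral_congr_ae (Eventually.of_forall (fun ω => show
            s n ω * (starRingEnd ℂ) (s m ω) * (starRingEnd ℂ) (s p ω) * s q ω
            = s n ω * ((starRingEnd ℂ) (s m ω) * (starRingEnd ℂ) (s p ω) * s q ω) by ring)), hz]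
          simp [hnm, hnp]

end aux


/-- The cross-ambiguity function between the `n`-th and `m`-th time-shifted pulses:
`ψ_{n,m}(τ,ν) = exp(−2πi·n·ν·T) · ψ(τ + (m−n)·T, ν)`. -/
noncomputable def psiNM (ψ : ℝ × ℝ → ℂ) (T τ ν : ℝ) (n m : ℕ) : ℂ :=
  Complex.exp (-2 * Real.pi * Complex.I * n * ν * T) * ψ (τ + ((m : ℝ) - n) * T, ν)

/-- The ambiguity function of the frame signal:
`χ(τ,ν) = Σ_n Σ_m s_n conj(s_m) ψ_{n,m}(τ,ν)`. -/
noncomputable def chi {Ω : Type*} (L : ℕ) (ψ : ℝ × ℝ → ℂ) (T τ ν : ℝ)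
    (s : Fin L → Ω → ℂ) (ω : Ω) : ℂ :=
  ∑ n : Fin L, ∑ m : Fin L, s n ω * (starRingEnd ℂ) (s m ω) * psiNM ψ T τ ν n m

/-- The weighting coefficients: `α_0(ν) = L(μ₄ − 1) + |Σ_{m<L} exp(−2πi·m·ν·T)|²` and
`α_n(ν) = L − |n|` for `n ≠ 0`. -/
noncomputable def alphaCoef (L : ℕ) (μ₄ T ν : ℝ) (n : ℤ) : ℝ :=
  if n = 0 then
    L * (μ₄ - 1) +
      (norm (∑ m : Fin L, Complex.exp (-2 * Real.pi * Complex.I * (m : ℕ) * ν * T))) ^ 2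
  else (L : ℝ) - |(n : ℝ)|

/-- The mean squared ambiguity function has the closed form
`E[|χ(τ,ν)|²] = Σ_{|n| < L} α_n(ν) · |ψ(τ + nT, ν)|²`. -/
theorem mean_squared_ambiguity_closed_form
    {Ω : Type*} [MeasureSpace Ω] [IsProbabilityMeasure (ℙ : Measure Ω)]
    (L : ℕ) (hL : 1 ≤ L) (T : ℝ) (hT : 0 < T) (τ ν : ℝ)
    (ψ : ℝ × ℝ → ℂ) (s : Fin L → Ω → ℂ) (μ₄ : ℝ) (hμ₄ : 1 ≤ μ₄)
    (hmeas : ∀ n : Fin L, Measurable (s n))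
    (hindep : iIndepFun s ℙ)
    (hmean : ∀ n : Fin L, ∫ ω, s n ω ∂ℙ = 0)
    (hpseudo : ∀ n : Fin L, ∫ ω, (s n ω) ^ 2 ∂ℙ = 0)
    (hE2 : ∀ n : Fin L, ∫ ω, (norm (s n ω)) ^ 2 ∂ℙ = 1)
    (hmom4 : ∀ n : Fin L, Integrable (fun ω => (norm (s n ω)) ^ 4) ℙ)
    (hE4 : ∀ n : Fin L, ∫ ω, (norm (s n ω)) ^ 4 ∂ℙ = μ₄) :
    (∫ ω, (norm (chi L ψ T τ ν s ω)) ^ 2 ∂ℙ)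
      = ∑ n ∈ Finset.Ioo (-(L : ℤ)) (L : ℤ),
          alphaCoef L μ₄ T ν n * (norm (ψ (τ + n * T, ν))) ^ 2 := by

  classical
  set g : ℤ → ℝ := fun k => (norm (ψ (τ + (k : ℝ) * T, ν))) ^ 2 with hgdef
  set A : ℂ := ∑ m : Fin L, Complex.exp (-2 * Real.pi * Complex.I * (m : ℕ) * ν * T) with hAdef
  -- step 1 : complex formula
  have hchi : ∀ ω, chi L ψ T τ ν s ω
      = ∑ x : Fin L × Fin L, s x.1 ω * (starRingEnd ℂ) (s x.2 ω) * psiNM ψ T τ ν x.1 x.2 :=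
    fun ω => by
      unfold chi
      exact (Fintype.sum_prod_type
        (fun x : Fin L × Fin L => s x.1 ω * (starRingEnd ℂ) (s x.2 ω) * psiNM ψ T τ ν x.1 x.2)).symm
  have hquadint : ∀ x y : Fin L × Fin L,
      Integrable (fun ω => (s x.1 ω * (starRingEnd ℂ) (s x.2 ω) * psiNM ψ T τ ν x.1 x.2)
        * (starRingEnd ℂ) (s y.1 ω * (starRingEnd ℂ) (s y.2 ω) * psiNM ψ T τ ν y.1 y.2)) ℙ := by
    intro x y
    have mid : Measurable fun z : ℂ => z := measurable_id
    have mconj : Measurable fun z : ℂ => (starRingEnd ℂ) z := Complex.continuous_conj.measurable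
    have bid : ∀ z : ℂ, norm ((fun z : ℂ => z) z) ≤ max 1 (norm z) :=
      fun z => le_max_right _ _
    have bconj : ∀ z : ℂ, norm ((fun z : ℂ => (starRingEnd ℂ) z) z)
        ≤ max 1 (norm z) := fun z => by
      rw [Complex.norm_conj]; exact le_max_right _ _
    have base : Integrable
        (fun ω => s x.1 ω * (starRingEnd ℂ) (s x.2 ω) * (starRingEnd ℂ) (s y.1 ω) * s y.2 ω) ℙ := by
      have := int_mul4 s hmeas hmom4 x.1 x.2 y.1 y.2 (fun z => z) (fun z => (starRingEnd ℂ) z)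
        (fun z => (starRingEnd ℂ) z) (fun z => z) mid mconj mconj mid bid bconj bconj bid
      simpa using this
    have := base.mul_const (psiNM ψ T τ ν x.1 x.2 * (starRingEnd ℂ) (psiNM ψ T τ ν y.1 y.2))
    apply this.congr
    filter_upwards with ω
    simp only [map_mul, Complex.conj_conj]
    ring
  have hcomplex : ((∫ ω, (norm (chi L ψ T τ ν s ω)) ^ 2 ∂ℙ : ℝ) : ℂ)
      = ∑ x : Fin L × Fin L, ∑ y : Fin L × Fin L,
          (∫ ω, s x.1 ω * (starRingEnd ℂ) (s x.2 ω) * (starRingEnd ℂ) (s y.1 ω) * s y.2 ω ∂ℙ)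
            * (psiNM ψ T τ ν x.1 x.2 * (starRingEnd ℂ) (psiNM ψ T τ ν y.1 y.2)) := by
    have e0 : ((∫ ω, (norm (chi L ψ T τ ν s ω)) ^ 2 ∂ℙ : ℝ) : ℂ)
        = ∫ ω, (((norm (chi L ψ T τ ν s ω)) ^ 2 : ℝ) : ℂ) ∂ℙ := integral_ofReal.symm
    rw [e0]
    have hpoint : ∀ ω, (((norm (chi L ψ T τ ν s ω)) ^ 2 : ℝ) : ℂ)
        = ∑ x : Fin L × Fin L, ∑ y : Fin L × Fin L,
            (s x.1 ω * (starRingEnd ℂ) (s x.2 ω) * psiNM ψ T τ ν x.1 x.2)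
              * (starRingEnd ℂ) (s y.1 ω * (starRingEnd ℂ) (s y.2 ω) * psiNM ψ T τ ν y.1 y.2) := by
      intro ω
      calc (((norm (chi L ψ T τ ν s ω)) ^ 2 : ℝ) : ℂ)
          = chi L ψ T τ ν s ω * (starRingEnd ℂ) (chi L ψ T τ ν s ω) := by
            rw [Complex.mul_conj, ← Complex.sq_norm, Complex.ofReal_pow]
        _ = (∑ x : Fin L × Fin L, s x.1 ω * (starRingEnd ℂ) (s x.2 ω) * psiNM ψ T τ ν x.1 x.2)
            * ∑ y : Fin L × Fin L, (starRingEnd ℂ)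
                (s y.1 ω * (starRingEnd ℂ) (s y.2 ω) * psiNM ψ T τ ν y.1 y.2) := by
            rw [hchi ω, map_sum]
        _ = _ := Finset.sum_mul_sum _ _ _ _
    rw [integral_congr_ae (Eventually.of_forall hpoint),
      integral_finset_sum _ (fun x _ => integrable_finset_sum _ (fun y _ => hquadint x y))]
    refine Finset.sum_congr rfl fun x _ => ?_
    rw [integral_finset_sum _ (fun y _ => hquadint x y)]
    refine Finset.sum_congr rfl fun y _ => ?_
    rw [← integral_mul_const]
    exact integral_congr_ae (Eventually.of_forall fun ω => by
      simp only [map_mul, Complex.conj_conj]; ring)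
  -- step 2 : expectations
  have hkey : ∀ x y : Fin L × Fin L,
      (∫ ω, s x.1 ω * (starRingEnd ℂ) (s x.2 ω) * (starRingEnd ℂ) (s y.1 ω) * s y.2 ω ∂ℙ)
        = (if x.1 = x.2 ∧ y.1 = y.2 then (1:ℂ) else 0)
          + (if x.1 = y.1 ∧ x.2 = y.2 then (1:ℂ) else 0)
          + (if x.1 = x.2 ∧ x.1 = y.1 ∧ x.1 = y.2 then (μ₄ : ℂ) - 2 else 0) :=
    fun x y => E4 hindep hmeas hmean hpseudo hE2 hmom4 hE4 x.1 x.2 y.1 y.2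
  have hcomplex2 : ((∫ ω, (norm (chi L ψ T τ ν s ω)) ^ 2 ∂ℙ : ℝ) : ℂ)
      = (∑ n : Fin L, psiNM ψ T τ ν n n) * (starRingEnd ℂ) (∑ n : Fin L, psiNM ψ T τ ν n n)
        + (∑ x : Fin L × Fin L, psiNM ψ T τ ν x.1 x.2 * (starRingEnd ℂ) (psiNM ψ T τ ν x.1 x.2))
        + ((μ₄ : ℂ) - 2) * ∑ n : Fin L, psiNM ψ T τ ν n n * (starRingEnd ℂ) (psiNM ψ T τ ν n n) := by
    rw [hcomplex,
      Finset.sum_congr rfl (fun x _ => Finset.sum_congr rfl (fun y _ => by rw [hkey x y]))]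
    exact sum_ifs (fun n m : Fin L => psiNM ψ T τ ν n m) μ₄
  -- step 3 : evaluate the diagonal pieces
  have habse : ∀ n : ℕ,
      norm (Complex.exp (-2 * Real.pi * Complex.I * n * ν * T)) = 1 := by
    intro n
    have h : (-2 * (Real.pi : ℂ) * Complex.I * n * ν * T)
        = ((-2 * Real.pi * n * ν * T : ℝ) : ℂ) * Complex.I := by push_cast; ring
    rw [h, Complex.norm_exp_ofReal_mul_I]
  have hcnn : ∀ n : Fin L, psiNM ψ T τ ν n n
      = Complex.exp (-2 * Real.pi * Complex.I * (n : ℕ) * ν * T) * ψ (τ, ν) := by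
    intro n; unfold psiNM; norm_num
  have hg0 : g 0 = (norm (ψ (τ, ν))) ^ 2 := by simp [hgdef]
  have hdiagsum : (∑ n : Fin L, psiNM ψ T τ ν n n) = A * ψ (τ, ν) := by
    rw [hAdef, Finset.sum_mul]
    exact Finset.sum_congr rfl fun n _ => hcnn n
  have hP1 : (∑ n : Fin L, psiNM ψ T τ ν n n)
        * (starRingEnd ℂ) (∑ n : Fin L, psiNM ψ T τ ν n n)
      = (((norm A) ^ 2 * g 0 : ℝ) : ℂ) := by
    rw [hdiagsum, map_mul]
    calc A * ψ (τ, ν) * ((starRingEnd ℂ) A * (starRingEnd ℂ) (ψ (τ, ν)))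
        = (A * (starRingEnd ℂ) A) * (ψ (τ, ν) * (starRingEnd ℂ) (ψ (τ, ν))) := by ring
      _ = ((Complex.normSq A : ℝ) : ℂ) * ((Complex.normSq (ψ (τ, ν)) : ℝ) : ℂ) := by
          rw [Complex.mul_conj, Complex.mul_conj]
      _ = (((norm A) ^ 2 * g 0 : ℝ) : ℂ) := by
          rw [hg0, ← Complex.sq_norm, ← Complex.sq_norm, Complex.ofReal_mul]
  have habsdiag : ∀ n : Fin L, psiNM ψ T τ ν n n * (starRingEnd ℂ) (psiNM ψ T τ ν n n)
      = ((g 0 : ℝ) : ℂ) := by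
    intro n
    rw [Complex.mul_conj, ← Complex.sq_norm, hcnn n, norm_mul, habse, one_mul, hg0]
  have hP3 : (∑ n : Fin L, psiNM ψ T τ ν n n * (starRingEnd ℂ) (psiNM ψ T τ ν n n))
      = (((L : ℝ) * g 0 : ℝ) : ℂ) := by
    rw [Finset.sum_congr rfl fun n _ => habsdiag n, Finset.sum_const, Finset.card_univ,
      Fintype.card_fin, nsmul_eq_mul]
    push_cast
    ring
  have hP2 : (∑ x : Fin L × Fin L, psiNM ψ T τ ν x.1 x.2 * (starRingEnd ℂ) (psiNM ψ T τ ν x.1 x.2))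
      = ((∑ n : Fin L, ∑ m : Fin L, g ((m : ℤ) - (n : ℤ)) : ℝ) : ℂ) := by
    rw [Fintype.sum_prod_type]
    push_cast
    refine Finset.sum_congr rfl fun n _ => Finset.sum_congr rfl fun m _ => ?_
    rw [Complex.mul_conj, ← Complex.sq_norm]
    unfold psiNM
    rw [norm_mul, habse, one_mul, hgdef]
    norm_num
  have hofreal : ((∫ ω, (norm (chi L ψ T τ ν s ω)) ^ 2 ∂ℙ : ℝ) : ℂ)
      = ((((norm A) ^ 2 * g 0 + (∑ n : Fin L, ∑ m : Fin L, g ((m : ℤ) - (n : ℤ)))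
          + (μ₄ - 2) * ((L : ℝ) * g 0) : ℝ)) : ℂ) := by
    rw [hcomplex2, hP1, hP2, hP3]
    push_cast
    ring
  have hrealLHS : (∫ ω, (norm (chi L ψ T τ ν s ω)) ^ 2 ∂ℙ)
      = (norm A) ^ 2 * g 0 + (∑ n : Fin L, ∑ m : Fin L, g ((m : ℤ) - (n : ℤ)))
        + (μ₄ - 2) * ((L : ℝ) * g 0) := by exact_mod_cast hofreal
  rw [hrealLHS, sum_shift L g]
  have h0mem : (0:ℤ) ∈ Finset.Ioo (-(L:ℤ)) (L:ℤ) := by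
    simp only [Finset.mem_Ioo]
    omega
  rw [← Finset.add_sum_erase _ (fun k : ℤ => alphaCoef L μ₄ T ν k * g k) h0mem,
      ← Finset.add_sum_erase _ (fun k : ℤ => ((L:ℝ) - |(k:ℝ)|) * g k) h0mem]
  have herase : ∑ k ∈ (Finset.Ioo (-(L:ℤ)) (L:ℤ)).erase 0, alphaCoef L μ₄ T ν k * g k
      = ∑ k ∈ (Finset.Ioo (-(L:ℤ)) (L:ℤ)).erase 0, ((L:ℝ) - |(k:ℝ)|) * g k := by
    refine Finset.sum_congr rfl fun k hk => ?_
    have hk0 : k ≠ 0 := (Finset.mem_erase.mp hk).1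
    simp only [alphaCoef, if_neg hk0]
  rw [herase]
  have ha0 : alphaCoef L μ₄ T ν 0 = (L : ℝ) * (μ₄ - 1) + (norm A) ^ 2 := by
    simp only [alphaCoef, ← hAdef]
    norm_num
  rw [ha0]
  simp only [Int.cast_zero, abs_zero]
  ring
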